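/- There is no 3×3 complex matrix solution over Z₃×Z₃ to Izumi's equations: the set A(Z₃×Z₃) is empty. Concretely: there do not exist complex numbers a, u, v with |a| = 1, a³ = 1, and real δ = (9+√85)/2 such that 1 − δ = (conj(a)u + a·conj(u) − 1)·(conj(a)v + a·conj(v) − 1) together with conj(a)u + a·conj(u) = conj(a)v + a·conj(v). -/

import Mathlib

theorem stmt12 :
    ¬∃ a u v : ℂ, ‖a‖ = 1 ∧ a ^ 3 = 1 ∧
      (1 : ℂ) - (((9 + Real.sqrt 85) / 2 : ℝ) : ℂ) =
        ((starRingEnd ℂ) a * u + a * (starRingEnd ℂ) u - 1) *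
          ((starRingEnd ℂ) a * v + a * (starRingEnd ℂ) v - 1) ∧
      (starRingEnd ℂ) a * u + a * (starRingEnd ℂ) u =
        (starRingEnd ℂ) a * v + a * (starRingEnd ℂ) v := by
  rintro ⟨a, u, v, -, -, h1, h2⟩
  have hu : (starRingEnd ℂ) a * u + a * (starRingEnd ℂ) u
      = (2 * ((starRingEnd ℂ) a * u).re : ℝ) := by
    have := Complex.add_conj ((starRingEnd ℂ) a * u)
    simpa [map_mul, mul_comm] using this
  have hv : (starRingEnd ℂ) a * v + a * (starRingEnd ℂ) v
      = (2 * ((starRingEnd ℂ) a * v).re : ℝ) := by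
    have := Complex.add_conj ((starRingEnd ℂ) a * v)
    simpa [map_mul, mul_comm] using this
  set x : ℝ := ((starRingEnd ℂ) a * u).re
  set y : ℝ := ((starRingEnd ℂ) a * v).re
  rw [hu, hv] at h1 h2
  have hxy : (2 * x : ℝ) = 2 * y := by exact_mod_cast h2
  rw [← hxy] at h1
  have h1' : (1 : ℝ) - (9 + Real.sqrt 85) / 2 = (2 * x - 1) * (2 * x - 1) := by
    have := congrArg Complex.re h1
    push_cast at this
    simpa using this
  have hs : Real.sqrt 85 ≥ 0 := Real.sqrt_nonneg 85
  nlinarith [sq_nonneg (2 * x - 1)]
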